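/- Let Γ be a topologically finitely generated profinite group with positive rank gradient, let n be a natural number, and let H₁, …, Hₙ be topologically finitely generated closed subgroups of infinite index in Γ. Then the normalized Haar measure of the product set H₁H₂⋯Hₙ in Γ is zero. -/

import Mathlib

open scoped Pointwise

/-- `d(H)`: the smallest cardinality of a topological generating set of `H`. -/
noncomputable def topRank {Γ : Type*} [Group Γ] [TopologicalSpace Γ] [IsTopologicalGroup Γ]
    (H : Subgroup Γ) : ℕ :=
  sInf {n : ℕ | ∃ S : Finset Γ, S.card = n ∧ (S : Set Γ) ⊆ (H : Set Γ) ∧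
    (Subgroup.closure (S : Set Γ)).topologicalClosure = H}

/-- The rank gradient `∇Γ = inf (d(U) - 1)/[Γ : U]` over open subgroups `U`. -/
noncomputable def topRankGradient (Γ : Type*) [Group Γ] [TopologicalSpace Γ]
    [IsTopologicalGroup Γ] : ℝ :=
  sInf {r : ℝ | ∃ U : Subgroup Γ, IsOpen (U : Set Γ) ∧
    r = ((topRank U : ℝ) - 1) / (U.index : ℝ)}

/-- A subgroup is topologically finitely generated if it is the closure of the subgroup
generated by some finite subset. -/
def TopFG {Γ : Type*} [Group Γ] [TopologicalSpace Γ] [IsTopologicalGroup Γ]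
    (H : Subgroup Γ) : Prop :=
  ∃ S : Finset Γ, (S : Set Γ) ⊆ (H : Set Γ) ∧
    (Subgroup.closure (S : Set Γ)).topologicalClosure = H



/-- The product set `H₁H₂⋯Hₙ`. -/
def productSet {G : Type*} [Group G] {n : ℕ} (H : Fin n → Subgroup G) : Set G :=
  {g : G | ∃ f : Fin n → G, (∀ i, f i ∈ H i) ∧ g = (List.ofFn f).prod}

section ProductSet

variable {G : Type*} [Group G]

lemma productSet_zero (H : Fin 0 → Subgroup G) : productSet H = {1} := by
  ext g
  constructor
  · rintro ⟨f, -, rfl⟩; simp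
  · rintro rfl; exact ⟨Fin.elim0, fun i => i.elim0, by simp⟩

lemma productSet_succ {n : ℕ} (H : Fin (n + 1) → Subgroup G) :
    productSet H = (H 0 : Set G) * productSet (fun i => H i.succ) := by
  ext g
  constructor
  · rintro ⟨f, hf, rfl⟩
    rw [List.ofFn_succ, List.prod_cons]
    exact Set.mul_mem_mul (hf 0) ⟨fun i => f i.succ, fun i => hf i.succ, rfl⟩
  · rintro ⟨a, ha, b, ⟨f, hf, rfl⟩, rfl⟩
    refine ⟨Fin.cons a f, ?_, ?_⟩
    · intro i
      refine Fin.cases ?_ ?_ i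
      · simpa using ha
      · intro j; simpa using hf j
    · rw [List.ofFn_succ]
      simp

lemma productSet_subset {n : ℕ} {H : Fin n → Subgroup G} {W : Subgroup G}
    (h : ∀ i, H i ≤ W) : productSet H ⊆ (W : Set G) := by
  rintro g ⟨f, hf, rfl⟩
  refine W.list_prod_mem ?_
  intro x hx
  rw [List.mem_ofFn] at hx
  obtain ⟨i, rfl⟩ := hx
  exact h i (hf i)

/-- Key covering lemma: if each `J i` is covered by finitely many left cosets of `K i`,
then the product set of the `J i` is covered by finitely many left translates of
product sets of conjugates of the `K i`. -/
lemma productSet_cover {n : ℕ} :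
    ∀ (J K : Fin n → Subgroup G) (R : Fin n → Finset G),
    (∀ i, (J i : Set G) ⊆ ⋃ c ∈ R i, c • (K i : Set G)) →
    ∃ P : Finset (G × (Fin n → G)),
      productSet J ⊆ ⋃ p ∈ P, p.1 •
        productSet (fun i => (K i).map (MulAut.conj (p.2 i)).toMonoidHom) := by
  induction n with
  | zero =>
    intro J K R _
    refine ⟨{(1, fun _ => 1)}, ?_⟩
    intro g hg
    rw [productSet_zero] at hg
    rcases hg with rfl
    refine Set.mem_iUnion.2 ⟨(1, fun _ => 1), Set.mem_iUnion.2 ⟨Finset.mem_singleton_self _, ?_⟩⟩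
    rw [Set.mem_smul_set]
    refine ⟨1, ?_, by simp⟩
    rw [productSet_zero]
    rfl
  | succ n ih =>
    intro J K R hcov
    classical
    obtain ⟨P', hP'⟩ := ih (fun i => J i.succ) (fun i => K i.succ) (fun i => R i.succ)
      (fun i => hcov i.succ)
    refine ⟨(((R 0) ×ˢ P').image (fun q => (q.1 * q.2.1, Fin.cons q.2.1⁻¹ q.2.2))), ?_⟩
    intro g hg
    rw [productSet_succ J] at hg
    obtain ⟨a, ha, b, hb, rfl⟩ := hg
    obtain ⟨c, hc⟩ := Set.mem_iUnion.1 (hcov 0 ha)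
    obtain ⟨hcR, hac⟩ := Set.mem_iUnion.1 hc
    obtain ⟨k₀, hk₀, rfl⟩ := Set.mem_smul_set.1 hac
    obtain ⟨p, hp⟩ := Set.mem_iUnion.1 (hP' hb)
    obtain ⟨hpP, hbp⟩ := Set.mem_iUnion.1 hp
    obtain ⟨b', hb', rfl⟩ := Set.mem_smul_set.1 hbp
    refine Set.mem_iUnion.2 ⟨(c * p.1, Fin.cons p.1⁻¹ p.2), Set.mem_iUnion.2
      ⟨Finset.mem_image.2 ⟨(c, p), Finset.mem_product.2 ⟨hcR, hpP⟩, rfl⟩, ?_⟩⟩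
    rw [Set.mem_smul_set]
    refine ⟨(p.1⁻¹ * k₀ * p.1) * b', ?_, ?_⟩
    · rw [productSet_succ]
      refine Set.mul_mem_mul ?_ ?_
      · refine ⟨k₀, hk₀, ?_⟩
        simp [MulAut.conj_apply, mul_assoc]
      · have : (fun i : Fin n => ((K i.succ).map (MulAut.conj (p.2 i)).toMonoidHom))
            = (fun i : Fin n =>
              ((fun j : Fin (n+1) => (K j).map
                (MulAut.conj ((Fin.cons p.1⁻¹ p.2 : Fin (n+1) → G) j)).toMonoidHom) i.succ)) := by
          funext i
          simp
        exact this ▸ hb'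
    · simp only [smul_eq_mul]
      group

end ProductSet
open MeasureTheory
open scoped ENNReal

section Measure

variable {G : Type*} [Group G] [TopologicalSpace G] [IsTopologicalGroup G]
  [MeasurableSpace G] [BorelSpace G]

/-- A closed subgroup of non-zero measure (w.r.t. a left-invariant probability measure)
has finite index. -/
lemma finiteIndex_of_measure_ne_zero (μ : Measure G) [IsProbabilityMeasure μ]
    [μ.IsMulLeftInvariant] (W : Subgroup G) (hWc : IsClosed (W : Set G))
    (hμ : μ (W : Set G) ≠ 0) : W.FiniteIndex := by
  have hfin : Finite (G ⧸ W) := by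
    by_contra hinf
    rw [not_finite_iff_infinite] at hinf
    obtain ⟨m, hm⟩ := ENNReal.exists_inv_nat_lt hμ
    have hm0 : m ≠ 0 := by
      rintro rfl
      simp only [Nat.cast_zero, ENNReal.inv_zero] at hm
      exact (hm.trans_le (prob_le_one)).ne_top rfl
    set e := Infinite.natEmbedding (G ⧸ W) with he
    set C : ℕ → Set G := fun j => (fun x => (Quotient.out (e j))⁻¹ * x) ⁻¹' (W : Set G) with hC
    have hCmeas : ∀ j, MeasurableSet (C j) :=
      fun j => hWc.measurableSet.preimage (continuous_mul_left _).measurable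
    have hCmem : ∀ (j : ℕ) (x : G), x ∈ C j ↔ QuotientGroup.mk x = e j := by
      intro j x
      rw [hC]
      simp only [Set.mem_preimage, SetLike.mem_coe]
      constructor
      · intro h
        have := (QuotientGroup.eq (s := W) (a := x) (b := Quotient.out (e j))).2
          (by simpa using W.inv_mem h)
        rw [QuotientGroup.out_eq'] at this
        exact this
      · intro h
        have : (QuotientGroup.mk (Quotient.out (e j)) : G ⧸ W) = QuotientGroup.mk x := by
          rw [QuotientGroup.out_eq', h]
        exact (QuotientGroup.eq (s := W)).1 this
    have hCdisj : (↑(Finset.range m) : Set ℕ).PairwiseDisjoint C := by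
      intro i _ j _ hij
      refine Set.disjoint_left.2 ?_
      intro x hxi hxj
      exact hij (e.injective (((hCmem i x).1 hxi).symm.trans ((hCmem j x).1 hxj)))
    have hCμ : ∀ j, μ (C j) = μ (W : Set G) := fun j => measure_preimage_mul μ _ _
    have hsum : μ (⋃ j ∈ Finset.range m, C j) = m * μ (W : Set G) := by
      rw [measure_biUnion_finset hCdisj (fun j _ => hCmeas j)]
      simp [hCμ, Finset.sum_const, nsmul_eq_mul]
    have hle : (m : ℝ≥0∞) * μ (W : Set G) ≤ 1 := by
      rw [← hsum]
      exact (measure_mono (Set.subset_univ _)).trans (by simp)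
    have : (1 : ℝ≥0∞) < m * μ (W : Set G) := by
      calc (1 : ℝ≥0∞) = (m : ℝ≥0∞) * (m : ℝ≥0∞)⁻¹ := by
            rw [ENNReal.mul_inv_cancel (by exact_mod_cast hm0) (by simp)]
        _ < m * μ (W : Set G) := by
            refine ENNReal.mul_lt_mul_right ?_ ?_ hm
            · exact_mod_cast hm0
            · simp
    exact absurd hle this.not_ge
  exact Subgroup.finiteIndex_of_finite_quotient (H := W)

/-- From positivity of the measure of a product set together with coset covers,
extract a conjugation pattern whose conjugated product set has positive measure. -/
lemma exists_pattern_measure_ne_zero (μ : Measure G) [μ.IsMulLeftInvariant]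
    {n : ℕ} (J K : Fin n → Subgroup G) (R : Fin n → Finset G)
    (hcov : ∀ i, (J i : Set G) ⊆ ⋃ c ∈ R i, c • (K i : Set G))
    (hμ : μ (productSet J) ≠ 0) :
    ∃ σ : Fin n → G,
      μ (productSet (fun i => (K i).map (MulAut.conj (σ i)).toMonoidHom)) ≠ 0 := by
  obtain ⟨P, hsub⟩ := productSet_cover J K R hcov
  by_contra h
  push_neg at h
  refine hμ ?_
  refine le_antisymm ?_ zero_le
  refine (measure_mono hsub).trans ?_
  refine le_of_le_of_eq (measure_biUnion_finset_le P _) ?_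
  refine Finset.sum_eq_zero ?_
  intro p _
  rw [MeasureTheory.measure_smul]
  exact h p.2

end Measure

section Topology

variable {G : Type*} [Group G] [TopologicalSpace G] [IsTopologicalGroup G]

/-- If `A` is dense in the closed subgroup `H` and `M` is open, then `A ⊓ M` is dense
in `H ⊓ M`. -/
lemma topologicalClosure_inf_of_isOpen {A H M : Subgroup G}
    (hA : A.topologicalClosure = H) (hM : IsOpen (M : Set G)) :
    (A ⊓ M).topologicalClosure = H ⊓ M := by
  have hHc : IsClosed (H : Set G) := by
    rw [← hA]; exact Subgroup.isClosed_topologicalClosure A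
  have hMc : IsClosed (M : Set G) := M.isClosed_of_isOpen hM
  refine le_antisymm ?_ ?_
  · refine Subgroup.topologicalClosure_minimal _ ?_ ?_
    · exact inf_le_inf (hA ▸ A.le_topologicalClosure) le_rfl
    · have : ((H ⊓ M : Subgroup G) : Set G) = (H : Set G) ∩ (M : Set G) := rfl
      rw [this]
      exact hHc.inter hMc
  · intro x hx
    obtain ⟨hxH, hxM⟩ := Subgroup.mem_inf.1 hx
    have hxcl : x ∈ _root_.closure (A : Set G) := by
      rw [← Subgroup.topologicalClosure_coe, hA]
      exact hxH
    have : x ∈ _root_.closure ((A ⊓ M : Subgroup G) : Set G) := by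
      rw [mem_closure_iff] at hxcl ⊢
      intro o ho hxo
      obtain ⟨a, hao, haA⟩ := hxcl (o ∩ M) (ho.inter hM) ⟨hxo, hxM⟩
      exact ⟨a, hao.1, Subgroup.mem_inf.2 ⟨haA, hao.2⟩⟩
    rw [← Subgroup.topologicalClosure_coe] at this
    exact this

/-- Conjugation commutes with topological closure of subgroups. -/
lemma topologicalClosure_map_conj (g : G) (K : Subgroup G) :
    (K.map (MulAut.conj g).toMonoidHom).topologicalClosure
      = K.topologicalClosure.map (MulAut.conj g).toMonoidHom := by
  apply SetLike.ext'
  rw [Subgroup.topologicalClosure_coe, Subgroup.coe_map, Subgroup.coe_map,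
    Subgroup.topologicalClosure_coe]
  have hfun : ⇑(MulAut.conj g).toMonoidHom
      = ⇑((Homeomorph.mulRight g⁻¹).trans (Homeomorph.mulLeft g)) := by
    funext x
    simp [MulAut.conj_apply, mul_assoc]
  rw [hfun, ← Homeomorph.image_closure]

variable [CompactSpace G] [T2Space G] [TotallyDisconnectedSpace G]

/-- In a profinite group, a point outside a closed subgroup can be separated from it by
an open normal subgroup. -/
lemma exists_openNormal_avoid (H : Subgroup G) (hH : IsClosed (H : Set G))
    {x : G} (hx : x ∉ H) :
    ∃ M : Subgroup G, M.Normal ∧ IsOpen (M : Set G) ∧ x ∉ (H : Set G) * (M : Set G) := by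
  have hK : IsCompact (H : Set G) := hH.isCompact
  have hU : IsOpen ({x}ᶜ : Set G) := isOpen_compl_singleton
  have hKU : (H : Set G) ⊆ {x}ᶜ := by
    intro h hh hmem
    rw [Set.mem_singleton_iff] at hmem
    exact hx (hmem ▸ hh)
  obtain ⟨V, hV, hKV⟩ := compact_open_separated_mul_right hK hU hKU
  obtain ⟨C, ⟨hC1, hCclopen⟩, hCV⟩ := (nhds_basis_clopen (1 : G)).mem_iff.mp hV
  obtain ⟨M, hM⟩ :=
    IsTopologicalGroup.exist_openNormalSubgroup_sub_clopen_nhds_of_one hCclopen hC1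
  refine ⟨M.toSubgroup, inferInstance, M.toOpenSubgroup.isOpen, ?_⟩
  intro hmem
  obtain ⟨a, ha, b, hb, hab⟩ := hmem
  have : a * b ∈ ({x}ᶜ : Set G) := hKV (Set.mul_mem_mul ha (hCV (hM hb)))
  rw [show a * b = x from hab] at this
  exact this rfl

lemma finiteIndex_of_isOpen (U : Subgroup G) (hU : IsOpen (U : Set G)) : U.FiniteIndex :=
  have : Finite (G ⧸ U) := U.quotient_finite_of_isOpen hU
  Subgroup.finiteIndex_of_finite_quotient (H := U)

/-- For a closed, non-open subgroup `H`, there are open normal subgroups `M` with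
`[G : H ⊔ M]` arbitrarily large. -/
lemma exists_deep_openNormal (H : Subgroup G) (hHc : IsClosed (H : Set G))
    (hHo : ¬ IsOpen (H : Set G)) (k : ℕ) :
    ∃ M : Subgroup G, M.Normal ∧ IsOpen (M : Set G) ∧ k ≤ (H ⊔ M).index := by
  by_contra hcon
  push_neg at hcon
  -- the set of achievable indices
  set I : Set ℕ := {j | ∃ M : Subgroup G, M.Normal ∧ IsOpen (M : Set G) ∧ (H ⊔ M).index = j}
    with hI
  have hIne : I.Nonempty := ⟨(H ⊔ ⊤).index, ⊤, inferInstance, by simp, rfl⟩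
  have hIbdd : BddAbove I := by
    refine ⟨k, ?_⟩
    rintro j ⟨M, hMn, hMo, rfl⟩
    exact (hcon M hMn hMo).le
  obtain ⟨M₀, hM₀n, hM₀o, hM₀eq⟩ := Nat.sSup_mem hIne hIbdd
  have hne : ∀ (M : Subgroup G), M.Normal → IsOpen (M : Set G) → (H ⊔ M).index ≠ 0 := by
    intro M _ hMo
    have : (H ⊔ M).FiniteIndex :=
      finiteIndex_of_isOpen _ (Subgroup.isOpen_mono le_sup_right hMo)
    exact this.index_ne_zero
  -- for every open normal M, H ⊔ M₀ ≤ H ⊔ (M ⊓ M₀) , hence H ⊔ M₀ ⊆ H * M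
  have key : ∀ (M : Subgroup G), M.Normal → IsOpen (M : Set G) →
      ((H ⊔ M₀ : Subgroup G) : Set G) ⊆ (H : Set G) * (M : Set G) := by
    intro M hMn hMo
    have hMM₀n : (M ⊓ M₀).Normal := by
      constructor
      intro x hx g
      exact Subgroup.mem_inf.2 ⟨hMn.conj_mem _ (Subgroup.mem_inf.1 hx).1 g,
        hM₀n.conj_mem _ (Subgroup.mem_inf.1 hx).2 g⟩
    have hMM₀o : IsOpen ((M ⊓ M₀ : Subgroup G) : Set G) := by
      have : ((M ⊓ M₀ : Subgroup G) : Set G) = (M : Set G) ∩ (M₀ : Set G) := rfl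
      rw [this]
      exact hMo.inter hM₀o
    have hle : H ⊔ (M ⊓ M₀) ≤ H ⊔ M₀ := sup_le_sup_left inf_le_right _
    have hdvd : (H ⊔ M₀).index ∣ (H ⊔ (M ⊓ M₀)).index := Subgroup.index_dvd_of_le hle
    have hmem : (H ⊔ (M ⊓ M₀)).index ∈ I := ⟨M ⊓ M₀, hMM₀n, hMM₀o, rfl⟩
    have hle' : (H ⊔ (M ⊓ M₀)).index ≤ sSup I := le_csSup hIbdd hmem
    have heq : (H ⊔ (M ⊓ M₀)).index = (H ⊔ M₀).index :=
      le_antisymm (hle'.trans_eq hM₀eq.symm)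
        (Nat.le_of_dvd (Nat.pos_of_ne_zero (hne _ hMM₀n hMM₀o)) hdvd)
    -- conclude equality of subgroups
    have hrel : (H ⊔ (M ⊓ M₀)).relIndex (H ⊔ M₀) = 1 := by
      have hmul := Subgroup.relIndex_mul_index hle
      rw [heq] at hmul
      have h0 : 0 < (H ⊔ M₀).index := Nat.pos_of_ne_zero (hne M₀ hM₀n hM₀o)
      have : (H ⊔ (M ⊓ M₀)).relIndex (H ⊔ M₀) * (H ⊔ M₀).index = 1 * (H ⊔ M₀).index := by
        rw [one_mul, hmul]
      exact Nat.eq_of_mul_eq_mul_right h0 this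
    have hle2 : H ⊔ M₀ ≤ H ⊔ (M ⊓ M₀) := Subgroup.relIndex_eq_one.1 hrel
    haveI := hMM₀n
    calc ((H ⊔ M₀ : Subgroup G) : Set G)
        ⊆ ((H ⊔ (M ⊓ M₀) : Subgroup G) : Set G) := hle2
      _ = (H : Set G) * ((M ⊓ M₀ : Subgroup G) : Set G) := Subgroup.mul_normal H (M ⊓ M₀)
      _ ⊆ (H : Set G) * (M : Set G) := by
          refine Set.mul_subset_mul_left ?_
          intro y hy
          exact (Subgroup.mem_inf.1 hy).1
  -- now conclude H is open, contradiction
  have hsub : ((H ⊔ M₀ : Subgroup G) : Set G) ⊆ (H : Set G) := by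
    intro x hx
    by_contra hxH
    obtain ⟨M, hMn, hMo, havoid⟩ := exists_openNormal_avoid H hHc hxH
    exact havoid (key M hMn hMo hx)
  have heq : H ⊔ M₀ = H := le_antisymm (fun x hx => hsub hx) le_sup_left
  have : IsOpen ((H ⊔ M₀ : Subgroup G) : Set G) := Subgroup.isOpen_mono le_sup_right hM₀o
  rw [heq] at this
  exact hHo this

/-- Simultaneous version for finitely many subgroups. -/
lemma exists_deep_openNormal_all {n : ℕ} (H : Fin n → Subgroup G)
    (hHc : ∀ i, IsClosed ((H i : Set G))) (hHo : ∀ i, ¬ IsOpen ((H i : Set G))) (k : ℕ) :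
    ∃ M : Subgroup G, M.Normal ∧ IsOpen (M : Set G) ∧ ∀ i, k ≤ (H i ⊔ M).index := by
  choose Mi hMin hMio hMik using fun i => exists_deep_openNormal (H i) (hHc i) (hHo i) k
  refine ⟨⨅ i, Mi i, ?_, ?_, ?_⟩
  · constructor
    intro x hx g
    rw [Subgroup.mem_iInf] at hx ⊢
    exact fun i => (hMin i).conj_mem _ (hx i) g
  · rw [Subgroup.coe_iInf]
    exact isOpen_iInter_of_finite (fun i => hMio i)
  · intro i
    have hle : H i ⊔ (⨅ j, Mi j) ≤ H i ⊔ Mi i :=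
      sup_le_sup_left (iInf_le _ i) _
    have hdvd := Subgroup.index_dvd_of_le hle
    have hiopen : IsOpen ((⨅ j, Mi j : Subgroup G) : Set G) := by
      rw [Subgroup.coe_iInf]
      exact isOpen_iInter_of_finite (fun j => hMio j)
    have h0 : (H i ⊔ (⨅ j, Mi j)).index ≠ 0 :=
      (finiteIndex_of_isOpen _ (Subgroup.isOpen_mono le_sup_right hiopen)).index_ne_zero
    exact (hMik i).trans (Nat.le_of_dvd (Nat.pos_of_ne_zero h0) hdvd)

end Topology

section Schreier

variable {G : Type*} [Group G] [TopologicalSpace G] [IsTopologicalGroup G] [CompactSpace G]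
  [T2Space G] [TotallyDisconnectedSpace G]

/-- Coset cover of `H` by finitely many left translates of `H ⊓ M`. -/
lemma exists_coset_cover (H M : Subgroup G)
    (h : (M.subgroupOf H).index ≠ 0) :
    ∃ R : Finset G, (H : Set G) ⊆ ⋃ c ∈ R, c • ((H ⊓ M : Subgroup G) : Set G) := by
  classical
  have hfin : Finite (↥H ⧸ M.subgroupOf H) := Nat.finite_of_card_ne_zero h
  haveI := Fintype.ofFinite (↥H ⧸ M.subgroupOf H)
  refine ⟨Finset.univ.image
    (fun q : ↥H ⧸ M.subgroupOf H => ((Quotient.out q : ↥H) : G)), ?_⟩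
  intro x hx
  set xH : ↥H := ⟨x, hx⟩ with hxH
  set q : ↥H ⧸ M.subgroupOf H := QuotientGroup.mk xH with hq
  refine Set.mem_iUnion.2 ⟨((Quotient.out q : ↥H) : G), Set.mem_iUnion.2
    ⟨Finset.mem_image_of_mem _ (Finset.mem_univ q), ?_⟩⟩
  rw [Set.mem_smul_set]
  have hmem : (Quotient.out q)⁻¹ * xH ∈ M.subgroupOf H := by
    refine (QuotientGroup.eq (s := M.subgroupOf H)).1 ?_
    rw [QuotientGroup.out_eq']
  refine ⟨(((Quotient.out q)⁻¹ * xH : ↥H) : G), ?_, ?_⟩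
  · refine Subgroup.mem_inf.2 ⟨((Quotient.out q)⁻¹ * xH : ↥H).2, ?_⟩
    exact (Subgroup.mem_subgroupOf).1 hmem
  · push_cast
    simp [smul_eq_mul, hxH]

/-- Schreier-type package: a topological generating set for `H ⊓ M` with a quantitative
cardinality bound. -/
lemma schreier_package (M : Subgroup G) [hMn : M.Normal] (hMo : IsOpen (M : Set G))
    (H : Subgroup G) (S : Finset G) (hS : (S : Set G) ⊆ (H : Set G))
    (hScl : (Subgroup.closure (S : Set G)).topologicalClosure = H) :
    ∃ T : Finset G, (T : Set G) ⊆ ((H ⊓ M : Subgroup G) : Set G) ∧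
      (Subgroup.closure (T : Set G)).topologicalClosure = H ⊓ M ∧
      T.card * (H ⊔ M).index ≤ S.card * M.index := by
  classical
  set A : Subgroup G := Subgroup.closure (S : Set G) with hA
  have hA_le : A ≤ H := (Subgroup.closure_le H).mpr hS
  haveI hMfi : M.FiniteIndex := finiteIndex_of_isOpen M hMo
  haveI : (M.subgroupOf A).FiniteIndex := Subgroup.instFiniteIndex_subgroupOf M A
  -- a generating finset for ↥A
  set S' : Finset ↥A := S.preimage ((↑) : ↥A → G) (Subtype.val_injective.injOn) with hS'
  have hS'coe : (S' : Set ↥A) = ((↑) : ↥A → G) ⁻¹' (S : Set G) := by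
    rw [hS']; exact Finset.coe_preimage _ _
  have hS'card : S'.card ≤ S.card := by
    refine Finset.card_le_card_of_injOn (fun a => (a : G)) ?_ ?_
    · intro a ha
      rw [hS', Finset.mem_coe, Finset.mem_preimage] at ha
      exact ha
    · exact fun a _ b _ h => Subtype.ext h
  have hS'top : Subgroup.closure (S' : Set ↥A) = ⊤ := by
    rw [hS'coe]
    exact Subgroup.closure_closure_coe_preimage
  obtain ⟨T', hT'card, hT'cl⟩ := Subgroup.exists_finset_card_le_mul (M.subgroupOf A) hS'top
  set φ : ↥(M.subgroupOf A) →* G := A.subtype.comp (M.subgroupOf A).subtype with hφ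
  set T : Finset G := T'.image φ with hT
  have hTcl : Subgroup.closure (T : Set G) = A ⊓ M := by
    rw [hT, Finset.coe_image, ← MonoidHom.map_closure, hT'cl]
    have e1 : Subgroup.map (M.subgroupOf A).subtype (⊤ : Subgroup ↥(M.subgroupOf A))
        = M.subgroupOf A := by
      rw [← MonoidHom.range_eq_map, Subgroup.range_subtype]
    have e2 : Subgroup.map φ (⊤ : Subgroup ↥(M.subgroupOf A))
        = Subgroup.map A.subtype (Subgroup.map (M.subgroupOf A).subtype ⊤) := by
      rw [Subgroup.map_map]
    rw [e2, e1, Subgroup.subgroupOf_map_subtype, inf_comm]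
  refine ⟨T, ?_, ?_, ?_⟩
  · have : (T : Set G) ⊆ ((A ⊓ M : Subgroup G) : Set G) := by
      rw [← hTcl]
      exact Subgroup.subset_closure
    refine this.trans ?_
    intro y hy
    exact Subgroup.mem_inf.2 ⟨hA_le (Subgroup.mem_inf.1 hy).1, (Subgroup.mem_inf.1 hy).2⟩
  · rw [hTcl]
    exact topologicalClosure_inf_of_isOpen hScl hMo
  · -- cardinality bound
    have h1 : T.card ≤ (M.subgroupOf A).index * S.card := by
      refine (Finset.card_image_le).trans (hT'card.trans ?_)
      exact Nat.mul_le_mul_left _ hS'card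
    have h2 : (M.subgroupOf A).index = M.relIndex A := rfl
    have h3 : M.relIndex A * (A ⊔ M).index = M.index := by
      rw [← Subgroup.relIndex_sup_right]
      exact Subgroup.relIndex_mul_index le_sup_right
    have h4 : (H ⊔ M).index ≤ (A ⊔ M).index := by
      have hle : A ⊔ M ≤ H ⊔ M := sup_le_sup_right hA_le _
      have h0 : (A ⊔ M).index ≠ 0 :=
        (finiteIndex_of_isOpen _ (Subgroup.isOpen_mono le_sup_right hMo)).index_ne_zero
      exact Nat.le_of_dvd (Nat.pos_of_ne_zero h0) (Subgroup.index_dvd_of_le hle)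
    calc T.card * (H ⊔ M).index
        ≤ ((M.subgroupOf A).index * S.card) * (A ⊔ M).index :=
          Nat.mul_le_mul h1 h4
      _ = S.card * (M.relIndex A * (A ⊔ M).index) := by rw [h2]; ring
      _ = S.card * M.index := by rw [h3]

end Schreier
section Main

open MeasureTheory

theorem stmt_15 {Γ : Type*} [Group Γ] [TopologicalSpace Γ] [IsTopologicalGroup Γ]
    [CompactSpace Γ] [TotallyDisconnectedSpace Γ] [T2Space Γ]
    [MeasurableSpace Γ] [BorelSpace Γ]
    (μ : MeasureTheory.Measure Γ) [μ.IsHaarMeasure] [MeasureTheory.IsProbabilityMeasure μ]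
    (hfg : TopFG (⊤ : Subgroup Γ)) (hrg : 0 < topRankGradient Γ)
    (n : ℕ) (H : Fin n → Subgroup Γ)
    (hHc : ∀ i, IsClosed ((H i : Set Γ)))
    (hHfg : ∀ i, TopFG (H i))
    (hHi : ∀ i, ¬ IsOpen ((H i : Set Γ))) :
    μ (productSet H) = 0 := by
  classical
  by_contra hμP
  choose S hSsub hScl using hHfg
  -- choose the threshold k
  obtain ⟨k₀, hk₀⟩ := exists_nat_gt ((∑ i, ((S i).card : ℝ)) / topRankGradient Γ)
  set k : ℕ := k₀ + 1 with hk
  have hkpos : (0 : ℝ) < (k : ℝ) := by positivity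
  have hsum_lt : (∑ i, ((S i).card : ℝ)) < topRankGradient Γ * k := by
    rw [div_lt_iff₀ hrg] at hk₀
    calc (∑ i, ((S i).card : ℝ)) < k₀ * topRankGradient Γ := hk₀
      _ ≤ k * topRankGradient Γ := by
          refine mul_le_mul_of_nonneg_right ?_ hrg.le
          exact_mod_cast Nat.le_succ k₀
      _ = topRankGradient Γ * k := by ring
  -- choose a deep open normal subgroup M
  obtain ⟨M, hMn, hMo, hMk⟩ := exists_deep_openNormal_all H hHc hHi k
  haveI := hMn
  haveI hMfi : M.FiniteIndex := finiteIndex_of_isOpen M hMo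
  have hv0 : M.index ≠ 0 := hMfi.index_ne_zero
  have hvpos : (0 : ℝ) < (M.index : ℝ) := by exact_mod_cast Nat.pos_of_ne_zero hv0
  -- Schreier packages
  choose T hT1 hT2 hT3 using fun i => schreier_package M hMo (H i) (S i) (hSsub i) (hScl i)
  -- coset covers
  have hrel0 : ∀ i, (M.subgroupOf (H i)).index ≠ 0 := by
    intro i h0
    have hmm : M.relIndex (H i) * (H i ⊔ M).index = M.index := by
      rw [← Subgroup.relIndex_sup_right]
      exact Subgroup.relIndex_mul_index le_sup_right
    rw [show (M.subgroupOf (H i)).index = M.relIndex (H i) from rfl] at h0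
    rw [h0, zero_mul] at hmm
    exact hv0 hmm.symm
  choose R hR using fun i => exists_coset_cover (H i) M (hrel0 i)
  -- extract a conjugation pattern with positive measure
  obtain ⟨σ, hσ⟩ := exists_pattern_measure_ne_zero μ H (fun i => H i ⊓ M) R hR hμP
  set L : Fin n → Subgroup Γ :=
    fun i => (H i ⊓ M).map (MulAut.conj (σ i)).toMonoidHom with hL
  -- the cheap open subgroup W
  set Tfin : Finset Γ := Finset.univ.biUnion
    (fun i => (T i).image (fun x => (MulAut.conj (σ i)) x)) with hTfin
  set W : Subgroup Γ := (Subgroup.closure (Tfin : Set Γ)).topologicalClosure with hW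
  have hWclosed : IsClosed (W : Set Γ) := Subgroup.isClosed_topologicalClosure _
  have hTfinW : (Tfin : Set Γ) ⊆ (W : Set Γ) :=
    fun x hx => (Subgroup.le_topologicalClosure _) (Subgroup.subset_closure hx)
  have hLW : ∀ i, L i ≤ W := by
    intro i
    have h1 : (Subgroup.closure
        (⇑(MulAut.conj (σ i)).toMonoidHom '' (T i : Set Γ))).topologicalClosure = L i := by
      rw [← MonoidHom.map_closure, topologicalClosure_map_conj, hT2 i]
    rw [← h1]
    refine Subgroup.topologicalClosure_minimal _ ?_ hWclosed
    refine (Subgroup.closure_le W).2 ?_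
    rintro y ⟨x, hx, rfl⟩
    have hx' : x ∈ T i := hx
    have hmem : (MulAut.conj (σ i)) x ∈ Tfin := by
      rw [hTfin]
      exact Finset.mem_biUnion.2 ⟨i, Finset.mem_univ i, Finset.mem_image_of_mem _ hx'⟩
    simpa using hTfinW hmem
  have hμW : μ (W : Set Γ) ≠ 0 := by
    intro h0
    refine hσ (le_antisymm ?_ zero_le)
    calc μ (productSet L) ≤ μ (W : Set Γ) := measure_mono (productSet_subset hLW)
      _ = 0 := h0
  haveI hWfi : W.FiniteIndex := finiteIndex_of_measure_ne_zero μ W hWclosed hμW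
  have hWopen : IsOpen (W : Set Γ) := Subgroup.isOpen_of_isClosed_of_finiteIndex W hWclosed
  have hWM : W ≤ M := by
    refine Subgroup.topologicalClosure_minimal _ ?_ (M.isClosed_of_isOpen hMo)
    refine (Subgroup.closure_le M).2 ?_
    intro y hy
    rw [hTfin] at hy
    obtain ⟨i, -, hy⟩ := Finset.mem_biUnion.1 (Finset.mem_coe.1 hy)
    obtain ⟨x, hxTi, rfl⟩ := Finset.mem_image.1 hy
    have hxM : x ∈ M := (Subgroup.mem_inf.1 (hT1 i (Finset.mem_coe.2 hxTi))).2
    rw [SetLike.mem_coe, MulAut.conj_apply]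
    exact hMn.conj_mem x hxM (σ i)
  have hWv : M.index ≤ W.index :=
    Nat.le_of_dvd (Nat.pos_of_ne_zero hWfi.index_ne_zero) (Subgroup.index_dvd_of_le hWM)
  -- rank bound
  have htr : topRank W ≤ Tfin.card := by
    refine Nat.sInf_le ?_
    exact ⟨Tfin, rfl, hTfinW, hW.symm⟩
  have hTfincard : Tfin.card ≤ ∑ i, (T i).card := by
    refine (Finset.card_biUnion_le).trans ?_
    refine Finset.sum_le_sum ?_
    intro i _
    exact Finset.card_image_le
  -- the rank gradient gives a lower bound
  have hbdd : BddBelow {r : ℝ | ∃ U : Subgroup Γ, IsOpen (U : Set Γ) ∧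
      r = ((topRank U : ℝ) - 1) / (U.index : ℝ)} := by
    by_contra hb
    have : topRankGradient Γ = 0 := by
      rw [topRankGradient, csInf_of_not_bddBelow hb, Real.sInf_empty]
    rw [this] at hrg
    exact lt_irrefl _ hrg
  have hlow : topRankGradient Γ ≤ ((topRank W : ℝ) - 1) / (W.index : ℝ) := by
    rw [topRankGradient]
    exact csInf_le hbdd ⟨W, hWopen, rfl⟩
  have hWidx_pos : (0 : ℝ) < (W.index : ℝ) := by
    exact_mod_cast Nat.pos_of_ne_zero hWfi.index_ne_zero
  have h1 : topRankGradient Γ * (W.index : ℝ) ≤ (topRank W : ℝ) - 1 :=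
    (le_div_iff₀ hWidx_pos).1 hlow
  -- the upper bound on the rank of W
  have hTi_real : ∀ i, ((T i).card : ℝ) * k ≤ ((S i).card : ℝ) * M.index := by
    intro i
    have hk_le : (T i).card * k ≤ (T i).card * (H i ⊔ M).index :=
      Nat.mul_le_mul_left _ (hMk i)
    exact_mod_cast hk_le.trans (hT3 i)
  have h2 : (topRank W : ℝ) ≤ ∑ i, ((T i).card : ℝ) := by
    exact_mod_cast htr.trans hTfincard
  have h3 : ∑ i, ((T i).card : ℝ) ≤ (∑ i, ((S i).card : ℝ)) * M.index / k := by
    rw [Finset.sum_mul, Finset.sum_div]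
    refine Finset.sum_le_sum ?_
    intro i _
    rw [le_div_iff₀ hkpos]
    exact hTi_real i
  have h4 : (∑ i, ((S i).card : ℝ)) * M.index / k < topRankGradient Γ * M.index := by
    rw [div_lt_iff₀ hkpos]
    calc (∑ i, ((S i).card : ℝ)) * M.index < (topRankGradient Γ * k) * M.index :=
          mul_lt_mul_of_pos_right hsum_lt hvpos
      _ = topRankGradient Γ * M.index * k := by ring
  have hfin : topRankGradient Γ * (M.index : ℝ) ≤ topRankGradient Γ * (W.index : ℝ) :=
    mul_le_mul_of_nonneg_left (by exact_mod_cast hWv) hrg.le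
  linarith

end Main
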